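/- Let X be generated by a linear Gaussian SEM X = BX + N with acyclic B, independent Gaussian noises with positive variances, and all coefficients on edges nonzero. Let j be a vertex, k a parent of j, and S any set with Pa(j)\{k} ⊆ S ⊆ ND(j)\{k} (S contains all other parents of j and consists of non-descendants of j). Then X_j and X_k are conditionally dependent given X_S. -/

import Mathlib

open Matrix Finset


namespace CDP

variable {p : ℕ}

/-- Entries of powers of an entrywise-nonnegative matrix are nonnegative. -/
lemma pow_entry_nonneg (M : Matrix (Fin p) (Fin p) ℝ) (hM : ∀ a b, 0 ≤ M a b) :
    ∀ m a b, 0 ≤ (M ^ m) a b := by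
  intro m
  induction m with
  | zero => intro a b; by_cases h : a = b <;> simp [h, Matrix.one_apply]
  | succ m ih =>
      intro a b
      rw [pow_succ, Matrix.mul_apply]
      exact Finset.sum_nonneg fun l _ => mul_nonneg (ih a l) (hM l b)

/-- The powers of `B` are supported on the powers of its adjacency matrix. -/
lemma pow_support (B : Matrix (Fin p) (Fin p) ℝ) :
    ∀ m a b, (((Matrix.of fun j k => if B j k ≠ 0 then (1 : ℝ) else 0)) ^ m) a b = 0 →
      (B ^ m) a b = 0 := by
  set M : Matrix (Fin p) (Fin p) ℝ := Matrix.of fun j k => if B j k ≠ 0 then (1 : ℝ) else 0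
    with hMdef
  have hM : ∀ a b, 0 ≤ M a b := by
    intro a b; by_cases h : B a b = 0 <;> simp [hMdef, h]
  intro m
  induction m with
  | zero => simp
  | succ m ih =>
      intro a b h
      rw [pow_succ', Matrix.mul_apply] at h
      have hterm : ∀ l ∈ Finset.univ, M a l * (M ^ m) l b = 0 := by
        rw [← Finset.sum_eq_zero_iff_of_nonneg]
        · exact h
        · intro l _
          exact mul_nonneg (hM a l) (pow_entry_nonneg M hM m l b)
      rw [pow_succ', Matrix.mul_apply]
      refine Finset.sum_eq_zero fun l _ => ?_
      by_cases hBal : B a l = 0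
      · simp [hBal]
      · have hMal : M a l = 1 := by simp [hMdef, hBal]
        have := hterm l (Finset.mem_univ l)
        rw [hMal, one_mul] at this
        rw [ih l b this, mul_zero]

/-- Nonzero entries of powers of `B` correspond to directed paths. -/
lemma pow_path (B : Matrix (Fin p) (Fin p) ℝ) :
    ∀ m l j, (B ^ m) l j ≠ 0 →
      l = j ∨ Relation.TransGen (fun a b => B b a ≠ 0) j l := by
  intro m
  induction m with
  | zero =>
      intro l j h
      left
      by_contra hne
      exact h (Matrix.one_apply_ne hne)
  | succ m ih =>
      intro l j h
      rw [pow_succ', Matrix.mul_apply] at h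
      obtain ⟨a, _, ha⟩ := Finset.exists_ne_zero_of_sum_ne_zero h
      have hBla : B l a ≠ 0 := left_ne_zero_of_mul ha
      have hpow : (B ^ m) a j ≠ 0 := right_ne_zero_of_mul ha
      rcases ih a j hpow with rfl | htg
      · exact Or.inr (Relation.TransGen.single hBla)
      · exact Or.inr (htg.tail hBla)

end CDP

namespace CDP

variable {p : ℕ}

lemma path_pos (B : Matrix (Fin p) (Fin p) ℝ) {x y : Fin p}
    (h : Relation.TransGen (fun a b => B b a ≠ 0) x y) :
    ∃ m, 1 ≤ m ∧
      0 < (((Matrix.of fun j k => if B j k ≠ 0 then (1 : ℝ) else 0)) ^ m) y x := by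
  set M : Matrix (Fin p) (Fin p) ℝ := Matrix.of fun j k => if B j k ≠ 0 then (1 : ℝ) else 0
    with hMdef
  have hM : ∀ a b, 0 ≤ M a b := by
    intro a b; by_cases h : B a b = 0 <;> simp [hMdef, h]
  induction h with
  | @single c hbc =>
      refine ⟨1, le_refl 1, ?_⟩
      rw [pow_one]
      simp [hMdef, hbc]
  | @tail b c hxb hbc ih =>
      obtain ⟨m, hm1, hm⟩ := ih
      refine ⟨m + 1, by omega, ?_⟩
      have hMcb : M c b = 1 := by simp [hMdef, hbc]
      calc (0 : ℝ) < M c b * (M ^ m) b x := by rw [hMcb]; simpa using hm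
        _ ≤ ∑ l, M c l * (M ^ m) l x :=
          Finset.single_le_sum (f := fun l => M c l * (M ^ m) l x)
            (fun l _ => mul_nonneg (hM c l) (pow_entry_nonneg M hM m l x))
            (Finset.mem_univ b)
        _ = (M ^ (m + 1)) c x := by rw [pow_succ', Matrix.mul_apply]

lemma no_cycle (B : Matrix (Fin p) (Fin p) ℝ)
    (hAdj : IsNilpotent (Matrix.of fun j k => if B j k ≠ 0 then (1 : ℝ) else 0))
    (x : Fin p) : ¬ Relation.TransGen (fun a b => B b a ≠ 0) x x := by
  set M : Matrix (Fin p) (Fin p) ℝ := Matrix.of fun j k => if B j k ≠ 0 then (1 : ℝ) else 0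
    with hMdef
  have hM : ∀ a b, 0 ≤ M a b := by
    intro a b; by_cases h : B a b = 0 <;> simp [hMdef, h]
  intro hcyc
  obtain ⟨m, hm1, hmpos'⟩ := path_pos B hcyc
  have hmpos : 0 < (M ^ m) x x := hmpos'
  obtain ⟨n, hn⟩ := hAdj
  -- all powers m * t (t ≥ 1) have positive (x,x) entry
  have hpow : ∀ t, 0 < (M ^ (m * (t + 1))) x x := by
    intro t
    induction t with
    | zero => simpa using hmpos
    | succ t ih =>
        have hmul : M ^ (m * (t + 1 + 1)) = M ^ (m * (t + 1)) * M ^ m := by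
          rw [← pow_add]; ring_nf
        rw [hmul, Matrix.mul_apply]
        calc (0:ℝ) < (M ^ (m * (t + 1))) x x * (M ^ m) x x := mul_pos ih hmpos
          _ ≤ ∑ l, (M ^ (m * (t + 1))) x l * (M ^ m) l x :=
            Finset.single_le_sum (f := fun l => (M ^ (m * (t + 1))) x l * (M ^ m) l x)
              (fun l _ => mul_nonneg (pow_entry_nonneg M hM _ x l)
                (pow_entry_nonneg M hM _ l x))
              (Finset.mem_univ x)
  -- but M ^ (m * (n+1)) = 0
  have hzero : M ^ (m * (n + 1)) = 0 := by
    have h2 : n + 1 ≤ m * (n + 1) := Nat.le_mul_of_pos_left _ hm1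
    have h1 : m * (n + 1) = n + (m * (n+1) - n) := by omega
    rw [h1, pow_add, hn, zero_mul]
  have := hpow n
  rw [hzero] at this
  simp at this

end CDP


namespace CDP

variable {p : ℕ}

lemma sum_zero_off (S : Finset (Fin p)) (F : Fin p → ℝ) (hF : ∀ a ∉ S, F a = 0) :
    ∑ a : Fin p, F a = ∑ s : S, F ↑s := by
  rw [Finset.sum_coe_sort S F]
  exact (Finset.sum_subset (Finset.subset_univ S) fun x _ hx => hF x hx).symm

end CDP

/-- Causal minimality for linear Gaussian SEMs: let `X = BX + N` with acyclic
`B`, independent Gaussian noises with positive variances `d i`, so that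
`Cov(X) = Σ = (I-B)⁻¹ D (I-B)⁻ᵀ`. If `k` is a parent of `j` and `S` satisfies
`Pa(j) \ {k} ⊆ S ⊆ ND(j) \ {k}`, then `X_j` and `X_k` are conditionally
dependent given `X_S`; for a Gaussian vector this means the partial covariance
`Σ_{jk} - Σ_{jS} Σ_{SS}⁻¹ Σ_{Sk}` is nonzero. -/
theorem conditional_dependence_on_parent
    (p : ℕ) (B : Matrix (Fin p) (Fin p) ℝ)
    (hAdj : IsNilpotent (Matrix.of fun j k => if B j k ≠ 0 then (1 : ℝ) else 0))
    (d : Fin p → ℝ) (hd : ∀ i, 0 < d i)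
    (Sig : Matrix (Fin p) (Fin p) ℝ)
    (hSig : Sig = (1 - B)⁻¹ * Matrix.diagonal d * ((1 - B)⁻¹)ᵀ)
    (j k : Fin p) (hk : B j k ≠ 0)
    (S : Finset (Fin p))
    (hPa : ∀ l, B j l ≠ 0 → l ≠ k → l ∈ S)
    (hND : ∀ s ∈ S, s ≠ k ∧ s ≠ j ∧ ¬ Relation.TransGen (fun a b => B b a ≠ 0) j s) :
    Sig j k - (fun s : S => Sig j s) ⬝ᵥ
        ((Matrix.of fun s t : S => Sig s t)⁻¹ *ᵥ fun s : S => Sig s k) ≠ 0 := by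
  classical
  have hnoCyc : ∀ x, ¬ Relation.TransGen (fun a b => B b a ≠ 0) x x := CDP.no_cycle B hAdj
  obtain ⟨n, hMn⟩ := hAdj
  have hBn : B ^ n = 0 := by
    ext a b
    have h0 : (((Matrix.of fun j k => if B j k ≠ 0 then (1 : ℝ) else 0)) ^ n) a b = 0 := by
      rw [hMn]; rfl
    simpa using CDP.pow_support B n a b h0
  have hBnil : IsNilpotent B := ⟨n, hBn⟩
  have hUnit : IsUnit (1 - B) := hBnil.isUnit_one_sub
  set A := (1 - B)⁻¹ with hAdef
  have hdet : IsUnit (1 - B).det := (Matrix.isUnit_iff_isUnit_det _).mp hUnit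
  have hdetA : IsUnit A.det := (1 - B).isUnit_nonsing_inv_det hdet
  have hgeom : (1 - B) * (∑ i ∈ Finset.range n, B ^ i) = 1 := by
    have h2 := mul_geom_sum B n
    calc (1 - B) * (∑ i ∈ Finset.range n, B ^ i)
        = -((B - 1) * ∑ i ∈ Finset.range n, B ^ i) := by noncomm_ring
      _ = -(B ^ n - 1) := by rw [h2]
      _ = 1 := by rw [hBn]; noncomm_ring
  have hAsum : A = ∑ i ∈ Finset.range n, B ^ i := Matrix.inv_eq_right_inv hgeom
  have hA1 : (1 - B) * A = 1 := Matrix.mul_nonsing_inv _ hdet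
  have hArec : A = 1 + B * A := by
    rw [sub_mul, one_mul, sub_eq_iff_eq_add] at hA1
    exact hA1
  have hAzero : ∀ l, l ≠ j → ¬ Relation.TransGen (fun a b => B b a ≠ 0) j l → A l j = 0 := by
    intro l hlj hnd
    rw [hAsum, Matrix.sum_apply]
    refine Finset.sum_eq_zero fun i _ => ?_
    by_contra hne
    rcases CDP.pow_path B i l j hne with rfl | h
    · exact hlj rfl
    · exact hnd h
  -- symmetry of Sig
  have hSymm : Sigᵀ = Sig := by
    rw [hSig, Matrix.transpose_mul, Matrix.transpose_mul, Matrix.transpose_transpose,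
      Matrix.diagonal_transpose, Matrix.mul_assoc]
  have hsymm : ∀ a b, Sig a b = Sig b a := by
    intro a b
    conv_lhs => rw [← hSymm]
    rfl
  -- positive definiteness of the quadratic form of Sig
  have hquad : ∀ x : Fin p → ℝ, x ≠ 0 → 0 < x ⬝ᵥ (Sig *ᵥ x) := by
    intro x hx
    set y := Aᵀ *ᵥ x with hy
    have hyne : y ≠ 0 := by
      intro h0
      apply hx
      have hback : (Aᵀ)⁻¹ *ᵥ (Aᵀ *ᵥ x) = x := by
        rw [Matrix.mulVec_mulVec, Matrix.nonsing_inv_mul _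
          (by rw [Matrix.det_transpose]; exact hdetA), Matrix.one_mulVec]
      rw [← hback, ← hy, h0, Matrix.mulVec_zero]
    have hform : x ⬝ᵥ (Sig *ᵥ x) = ∑ i, d i * (y i * y i) := by
      rw [hSig, ← Matrix.mulVec_mulVec, ← Matrix.mulVec_mulVec,
        Matrix.dotProduct_mulVec, ← Matrix.mulVec_transpose, ← hy]
      simp only [dotProduct, Matrix.mulVec_diagonal]
      exact Finset.sum_congr rfl fun i _ => by ring
    obtain ⟨i0, hi0⟩ := Function.ne_iff.mp hyne
    rw [hform]
    refine Finset.sum_pos' (fun i _ => mul_nonneg (hd i).le (mul_self_nonneg _)) ?_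
    exact ⟨i0, Finset.mem_univ i0, mul_pos (hd i0) (by
      have : y i0 ≠ 0 := hi0
      exact mul_self_pos.mpr this)⟩
  -- the submatrix on S
  set T : Matrix S S ℝ := Matrix.of fun s t : S => Sig s t with hT
  have hTPD : T.PosDef := by
    rw [Matrix.posDef_iff_dotProduct_mulVec]
    constructor
    · ext s t
      simp only [Matrix.conjTranspose_apply, hT, Matrix.of_apply, star_trivial]
      exact hsymm _ _
    · intro x hx
      simp only [star_trivial]
      set x' : Fin p → ℝ := fun a => if h : a ∈ S then x ⟨a, h⟩ else 0 with hx'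
      have hx'ne : x' ≠ 0 := by
        obtain ⟨s, hs⟩ := Function.ne_iff.mp hx
        intro h0
        apply hs
        have := congrFun h0 ↑s
        simpa [hx', s.2] using this
      have hmv : ∀ a, (Sig *ᵥ x') a = ∑ s : S, Sig a ↑s * x s := by
        intro a
        show ∑ b, Sig a b * x' b = _
        rw [CDP.sum_zero_off S _ (fun b hb => by simp [hx', hb])]
        exact Finset.sum_congr rfl fun s _ => by simp [hx', s.2]
      have hquad' : x' ⬝ᵥ (Sig *ᵥ x') = x ⬝ᵥ (T *ᵥ x) := by
        show ∑ a, x' a * (Sig *ᵥ x') a = _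
        rw [CDP.sum_zero_off S _ (fun a ha => by simp [hx', ha])]
        refine Finset.sum_congr rfl fun s _ => ?_
        rw [hmv]
        simp [hx', s.2, Matrix.mulVec, dotProduct, hT]
      have := hquad x' hx'ne
      rw [hquad'] at this
      exact this
  have hTdet : IsUnit T.det := isUnit_iff_ne_zero.mpr hTPD.det_pos.ne'
  set v2 : S → ℝ := fun s : S => Sig s k with hv2
  set w : S → ℝ := T⁻¹ *ᵥ v2 with hw
  have hTw : ∀ s : S, ∑ t : S, Sig ↑s ↑t * w t = Sig ↑s k := by
    intro s
    have h1 : T *ᵥ w = v2 := by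
      rw [hw, Matrix.mulVec_mulVec, Matrix.mul_nonsing_inv _ hTdet, Matrix.one_mulVec]
    have := congrFun h1 s
    simpa [Matrix.mulVec, dotProduct, hT, hv2] using this
  -- row identity
  have hrow : ∀ l, l ≠ j → ¬ Relation.TransGen (fun a b => B b a ≠ 0) j l →
      Sig j l = ∑ m, B j m * Sig m l := by
    intro l hlj hnd
    have hmat : Sig = Matrix.diagonal d * Aᵀ + B * Sig := by
      rw [hSig]
      nth_rewrite 1 [hArec]
      noncomm_ring
    have hentry := congrFun (congrFun hmat j) l
    rw [Matrix.add_apply, Matrix.diagonal_mul, Matrix.transpose_apply,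
      hAzero l hlj hnd, mul_zero, zero_add, Matrix.mul_apply] at hentry
    exact hentry
  -- facts about k
  have hkj : k ≠ j := by
    intro h
    subst h
    exact hnoCyc k (Relation.TransGen.single hk)
  have hkND : ¬ Relation.TransGen (fun a b => B b a ≠ 0) j k := by
    intro htg
    exact hnoCyc j (htg.tail hk)
  have hkS : k ∉ S := fun h => (hND k h).1 rfl
  -- the partial covariance equals B j k * c
  set c : ℝ := Sig k k - ∑ s : S, Sig k ↑s * w s with hc
  have hmain : Sig j k - (fun s : S => Sig j s) ⬝ᵥ w = B j k * c := by
    have hjk : Sig j k = ∑ m, B j m * Sig m k := hrow k hkj hkND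
    have hdot : (fun s : S => Sig j s) ⬝ᵥ w = ∑ m, B j m * ∑ s : S, Sig m ↑s * w s := by
      show ∑ s : S, Sig j ↑s * w s = _
      have hterm : ∀ s : S, Sig j ↑s * w s = ∑ m, B j m * Sig m ↑s * w s := by
        intro s
        rw [hrow ↑s (fun h => (hND ↑s s.2).2.1 h) (hND ↑s s.2).2.2, Finset.sum_mul]
      calc ∑ s : S, Sig j ↑s * w s
          = ∑ s : S, ∑ m, B j m * Sig m ↑s * w s :=
            Finset.sum_congr rfl fun s _ => hterm s
        _ = ∑ m, ∑ s : S, B j m * Sig m ↑s * w s := Finset.sum_comm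
        _ = ∑ m, B j m * ∑ s : S, Sig m ↑s * w s := by
            refine Finset.sum_congr rfl fun m _ => ?_
            rw [Finset.mul_sum]
            exact Finset.sum_congr rfl fun s _ => by ring
    rw [hjk, hdot, ← Finset.sum_sub_distrib]
    have hsingle : ∀ m, m ≠ k →
        B j m * Sig m k - B j m * ∑ s : S, Sig m ↑s * w s = 0 := by
      intro m hm
      by_cases hmS : m ∈ S
      · have := hTw ⟨m, hmS⟩
        simp only [Subtype.coe_mk] at this
        rw [this]
        ring
      · have hBjm : B j m = 0 := by
          by_contra hne
          exact hmS (hPa m hne hm)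
        rw [hBjm]
        ring
    rw [Finset.sum_eq_single k (fun m _ hm => hsingle m hm) (fun h => absurd (Finset.mem_univ k) h)]
    rw [hc]
    ring
  -- positivity of c
  set v : Fin p → ℝ := fun a =>
    (if a = k then 1 else 0) - (if h : a ∈ S then w ⟨a, h⟩ else 0) with hv
  have hvk : v k = 1 := by simp [hv, hkS]
  have hvne : v ≠ 0 := by
    intro h0
    have := congrFun h0 k
    rw [hvk] at this
    exact one_ne_zero this
  have hu : ∀ a, (Sig *ᵥ v) a = Sig a k - ∑ s : S, Sig a ↑s * w s := by
    intro a
    show ∑ b, Sig a b * v b = _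
    simp only [hv, mul_sub]
    rw [Finset.sum_sub_distrib]
    congr 1
    · simp [mul_ite]
    · rw [CDP.sum_zero_off S _ (fun b hb => by simp [hb])]
      exact Finset.sum_congr rfl fun s _ => by simp [s.2]
  have huz : ∀ s : S, (Sig *ᵥ v) ↑s = 0 := by
    intro s
    rw [hu, hTw s]
    ring
  have hcv : v ⬝ᵥ (Sig *ᵥ v) = c := by
    show ∑ a, v a * (Sig *ᵥ v) a = c
    simp only [hv, sub_mul]
    rw [Finset.sum_sub_distrib]
    have h1 : ∑ a, (if a = k then (1:ℝ) else 0) * (Sig *ᵥ v) a = (Sig *ᵥ v) k := by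
      simp [ite_mul]
    have h2 : ∑ a, (if h : a ∈ S then w ⟨a, h⟩ else 0) * (Sig *ᵥ v) a = 0 := by
      rw [CDP.sum_zero_off S _ (fun a ha => by simp [ha])]
      refine Finset.sum_eq_zero fun s _ => ?_
      rw [huz s]
      ring
    rw [h1, h2, hu k, sub_zero, hc]
  have hcpos : 0 < c := by
    rw [← hcv]
    exact hquad v hvne
  show Sig j k - (fun s : S => Sig j s) ⬝ᵥ w ≠ 0
  rw [hmain]
  exact mul_ne_zero hk hcpos.ne'
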